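/- A q-cycle σ ∈ 𝒞_q satisfies des(σ) = 1 if and only if σ is a rotation cycle, i.e., σ = ρ^p for some integer 1 ≤ p < q relatively prime to q. -/

import Mathlib

open scoped Classical

noncomputable section

/-- The representative of `i : ZMod q` in `{1, …, q}`. -/
def rep (q : ℕ) [NeZero q] (i : ZMod q) : ℕ :=
  if i = 0 then q else i.val

/-- The rotation `ρ : i ↦ i + 1 (mod q)` of `ZMod q`. -/
def rotPerm (q : ℕ) : Equiv.Perm (ZMod q) :=
  Equiv.addRight 1

/-- The descent number `des σ`: the number of `i ∈ ZMod q` with `σ(i) > σ(i+1)`,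
values compared via their representatives in `{1, …, q}`. -/
def desNum (q : ℕ) [NeZero q] (σ : Equiv.Perm (ZMod q)) : ℕ :=
  (Finset.univ.filter fun i : ZMod q => rep q (σ (i + 1)) < rep q (σ i)).card

/-- `σ` is a `q`-cycle, i.e. it acts transitively on `ZMod q`. -/
def IsQCycle (q : ℕ) (σ : Equiv.Perm (ZMod q)) : Prop :=
  ∀ i j : ZMod q, ∃ n : ℕ, (σ ^ n) i = j

/-- The transition matrix of `σ`: the `(i,j)` entry is `1` if `j` lies in the
cyclic interval `[σ(i), σ(i+1))` of `ZMod q` and `0` otherwise. -/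
def transMatrix (q : ℕ) [NeZero q] (σ : Equiv.Perm (ZMod q)) :
    Matrix (ZMod q) (ZMod q) ℝ :=
  Matrix.of fun i j => if (j - σ i).val < (σ (i + 1) - σ i).val then (1 : ℝ) else 0

/-- A probability vector: non-negative components summing to `1`. -/
def IsProbVec (q : ℕ) [NeZero q] (v : ZMod q → ℝ) : Prop :=
  (∀ i, 0 ≤ v i) ∧ ∑ i, v i = 1

/-- The symmetry order of `σ`: the order of the stabilizer of `σ` in the rotation
group `⟨ρ⟩` acting by conjugation. -/
def symOrder (q : ℕ) [NeZero q] (σ : Equiv.Perm (ZMod q)) : ℕ :=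
  ((Finset.range q).filter fun j => rotPerm q ^ j * σ * (rotPerm q ^ j)⁻¹ = σ).card

/-- `F : ℝ → ℝ` is a lift of a degree `k` covering map of `ℝ/ℤ`:
a homeomorphism of `ℝ` with `F (t+1) = F t + k`. -/
def IsDegreeLift (k : ℕ) (F : ℝ → ℝ) : Prop :=
  Continuous F ∧ StrictMono F ∧ ∀ t, F (t + 1) = F t + k

/-- The fixed point of the circle map corresponding to `u` (a point with
`F u - u ∈ ℤ`) is topologically repelling: `t ↦ F t - t` is strictly increasing
in a neighborhood of `u`. -/
def TopRepelling (F : ℝ → ℝ) (u : ℝ) : Prop :=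
  ∃ ε > 0, StrictMonoOn (fun t => F t - t) (Set.Ioo (u - ε) (u + ε))

/-- `x : ZMod q → ℝ` is a period `q` orbit realizing `σ` for the circle map with
lift `F`: the points `x i` lie in `(0,1)` and are increasing with respect to the
representatives `{1, …, q}` (so that `0, x₁, …, x_q` are in positive cyclic
order), and on the circle `f(x i) = x (σ i)` for all `i`. -/
def IsRealization (q : ℕ) [NeZero q] (σ : Equiv.Perm (ZMod q))
    (F : ℝ → ℝ) (x : ZMod q → ℝ) : Prop :=
  (∀ i, x i ∈ Set.Ioo (0 : ℝ) 1) ∧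
  (∀ i j : ZMod q, rep q i < rep q j → x i < x j) ∧
  (∀ i, ∃ m : ℤ, F (x i) = x (σ i) + m)

/-- A realization of `σ` under the multiplication map `m_k : x ↦ kx (mod ℤ)`. -/
def MkRealization (q k : ℕ) [NeZero q] (σ : Equiv.Perm (ZMod q)) (x : ZMod q → ℝ) : Prop :=
  IsRealization q σ (fun t => (k : ℝ) * t) x

/-- The upper endpoint (as a real number) of the partition interval
`I i = [x i, x (i+1)]`; for `i = 0 ≡ q` the interval wraps around `0 ∈ ℝ/ℤ`
and the endpoint is `x 1 + 1`. -/
def upperPt (q : ℕ) [NeZero q] (x : ZMod q → ℝ) (i : ZMod q) : ℝ :=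
  if i = 0 then x 1 + 1 else x (i + 1)

/-- The `i`-th component of the fixed point distribution: the number of fixed
points of `m_k` (the points `j/(k-1) (mod ℤ)`) in the interior of the partition
interval `I i`. -/
def fixDist (q k : ℕ) [NeZero q] (x : ZMod q → ℝ) (i : ZMod q) : ℕ :=
  ((Finset.Icc 1 (2 * (k - 1))).filter fun j : ℕ =>
    x i < (j : ℝ) / ((k : ℝ) - 1) ∧ (j : ℝ) / ((k : ℝ) - 1) < upperPt q x i).card

/-- The number of fixed points of `m_k` in the interval `(0, x 1)`. -/
def countFixBelow (q k : ℕ) [NeZero q] (x : ZMod q → ℝ) : ℕ :=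
  ((Finset.range (k - 1)).filter fun j : ℕ =>
    0 < j ∧ (j : ℝ) / ((k : ℝ) - 1) < x 1).card

/-- The `m`-th component of the (cumulative) deployment vector: the number of
orbit points in `(0, m/(k-1))`. -/
def depCount (q k : ℕ) [NeZero q] (x : ZMod q → ℝ) (m : ℕ) : ℕ :=
  (Finset.univ.filter fun j : ZMod q => x j < (m : ℝ) / ((k : ℝ) - 1)).card

/-- The rank of a marked index `i` among the marked indices `i₁ < ⋯ < i_{d-1}`
(ordered by their representatives in `{1, …, q}`). -/
def markRank (q : ℕ) [NeZero q] (σ : Equiv.Perm (ZMod q)) (i : ZMod q) : ℕ :=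
  (Finset.univ.filter fun i' : ZMod q =>
    transMatrix q σ i' i' = 1 ∧ rep q i' ≤ rep q i).card


section Aux

set_option linter.unusedSectionVars false

variable (q : ℕ) [NeZero q]

lemma cast_val' (i : ZMod q) : ((i.val : ℕ) : ZMod q) = i := ZMod.natCast_rightInverse i

lemma one_le_rep (i : ZMod q) : 1 ≤ rep q i := by
  unfold rep; split
  · exact Nat.one_le_iff_ne_zero.2 (NeZero.ne q)
  · exact Nat.one_le_iff_ne_zero.2 fun h => ‹¬ _› ((ZMod.val_eq_zero i).1 h)

lemma rep_le (i : ZMod q) : rep q i ≤ q := by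
  unfold rep; split
  · exact le_rfl
  · exact (ZMod.val_lt i).le

lemma cast_rep (i : ZMod q) : ((rep q i : ℕ) : ZMod q) = i := by
  unfold rep; split
  · simpa [ZMod.natCast_self] using ‹i = 0›.symm
  · exact cast_val' q i

lemma rep_injective : Function.Injective (rep q) := fun i j h => by
  have := congrArg (fun n : ℕ => (n : ZMod q)) h
  simpa [cast_rep] using this

lemma rotPerm_pow_apply (p : ℕ) (i : ZMod q) : (rotPerm q ^ p) i = i + p := by
  induction p with
  | zero => simp
  | succ n ih =>
    rw [pow_succ', Equiv.Perm.mul_apply, ih,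
      show ∀ j : ZMod q, rotPerm q j = j + 1 from fun _ => rfl]
    push_cast; ring

lemma rep_one (hq : 2 ≤ q) : rep q 1 = 1 := by
  have hv : (1 : ZMod q).val = 1 := by
    rw [ZMod.val_one_eq_one_mod, Nat.mod_eq_of_lt (by omega)]
  rw [rep, if_neg, hv]
  intro h; rw [h, ZMod.val_zero] at hv; omega

lemma descent_iff (hq : 2 ≤ q) (j : ZMod q) : rep q (j + 1) < rep q j ↔ j = 0 := by
  constructor
  · intro h
    by_contra hj
    rcases eq_or_ne (j + 1) 0 with h1 | h1
    · rw [rep, if_pos h1, rep, if_neg hj] at h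
      exact absurd h (not_lt.2 (ZMod.val_lt j).le)
    · have hvlt : j.val + 1 < q := by
        have := ZMod.val_lt j
        rcases Nat.lt_or_ge (j.val + 1) q with h' | h'
        · exact h'
        · exfalso
          have hq' : j.val + 1 = q := by omega
          apply h1
          rw [← cast_val' q j,
            show ((j.val : ZMod q) + 1) = ((j.val + 1 : ℕ) : ZMod q) by push_cast; ring,
            hq', ZMod.natCast_self]
      have hv1 : (1 : ZMod q).val = 1 := by
        rw [ZMod.val_one_eq_one_mod, Nat.mod_eq_of_lt (by omega)]
      have hadd : (j + 1).val = j.val + 1 := by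
        rw [ZMod.val_add_of_lt]
        · rw [hv1]
        · rw [hv1]; exact hvlt
      rw [rep, if_neg h1, rep, if_neg hj, hadd] at h
      omega
  · rintro rfl
    rw [zero_add, rep_one q hq, rep, if_pos rfl]
    omega

lemma desNum_eq_one_of_translation (hq : 2 ≤ q) (σ : Equiv.Perm (ZMod q)) (c : ZMod q)
    (hc : ∀ i, σ i = i + c) : desNum q σ = 1 := by
  unfold desNum
  have hfil : (Finset.univ.filter fun i : ZMod q => rep q (σ (i + 1)) < rep q (σ i)) = {-c} := by
    ext i
    simp only [Finset.mem_filter, Finset.mem_univ, true_and, Finset.mem_singleton, hc]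
    rw [show i + 1 + c = (i + c) + 1 by ring, descent_iff q hq]
    constructor
    · intro h; linear_combination h
    · intro h; rw [h]; ring
  rw [hfil, Finset.card_singleton]

lemma translation_of_desNum_one (hq : 2 ≤ q) (σ : Equiv.Perm (ZMod q))
    (h : desNum q σ = 1) : ∃ c : ZMod q, ∀ i, σ i = i + c := by
  obtain ⟨i₀, hi₀⟩ := Finset.card_eq_one.1 h
  have hmem : ∀ i : ZMod q, rep q (σ (i + 1)) < rep q (σ i) ↔ i = i₀ := by
    intro i
    rw [← Finset.mem_singleton, ← hi₀]
    simp
  have hone : (1 : ZMod q) ≠ 0 := by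
    intro h'
    have := congrArg ZMod.val h'
    rw [ZMod.val_one_eq_one_mod, Nat.mod_eq_of_lt (by omega), ZMod.val_zero] at this
    omega
  have hinc : ∀ i : ZMod q, i ≠ i₀ → rep q (σ i) < rep q (σ (i + 1)) := by
    intro i hi
    have h1 : ¬ rep q (σ (i + 1)) < rep q (σ i) := fun h' => hi ((hmem i).1 h')
    have h2 : rep q (σ i) ≠ rep q (σ (i + 1)) := by
      intro h'
      have := σ.injective (rep_injective q h')
      exact hone (by linear_combination -this)
    omega
  set g : ℕ → ℕ := fun k => rep q (σ (i₀ + 1 + k)) with hg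
  have hstep : ∀ k : ℕ, k + 1 < q → g k < g (k + 1) := by
    intro k hk
    have hne : (i₀ + 1 + k) ≠ i₀ := by
      intro h'
      have : ((k + 1 : ℕ) : ZMod q) = 0 := by push_cast; linear_combination h'
      rw [ZMod.natCast_eq_zero_iff] at this
      exact absurd (Nat.le_of_dvd (by omega) this) (by omega)
    have := hinc _ hne
    have heq : i₀ + 1 + (k : ZMod q) + 1 = i₀ + 1 + ((k + 1 : ℕ) : ZMod q) := by
      push_cast; ring
    rw [heq] at this
    exact this
  have hlow : ∀ k, k < q → k + 1 ≤ g k := by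
    intro k
    induction k with
    | zero => intro _; exact one_le_rep q _
    | succ n ih =>
      intro hk
      have h1 := hstep n hk
      have h2 := ih (by omega)
      omega
  have hupb : ∀ j, j < q → g (q - 1 - j) ≤ q - j := by
    intro j
    induction j with
    | zero => intro _; simpa using rep_le q _
    | succ n ih =>
      intro hj
      have h1 : (q - 1 - (n + 1)) + 1 = q - 1 - n := by omega
      have h2 := hstep (q - 1 - (n + 1)) (by omega)
      rw [h1] at h2
      have h3 := ih (by omega)
      omega
  have hgk : ∀ k, k < q → g k = k + 1 := by
    intro k hk
    have h1 := hlow k hk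
    have h2 := hupb (q - 1 - k) (by omega)
    rw [show q - 1 - (q - 1 - k) = k by omega] at h2
    omega
  refine ⟨-i₀, fun i => ?_⟩
  set k := (i - (i₀ + 1)).val with hk
  have hklt : k < q := ZMod.val_lt _
  have hik : i₀ + 1 + (k : ZMod q) = i := by rw [hk, cast_val']; ring
  have h1 : rep q (σ i) = k + 1 := by rw [← hik]; exact hgk k hklt
  have h2 : σ i = ((k + 1 : ℕ) : ZMod q) := by rw [← cast_rep q (σ i), h1]
  rw [h2]
  push_cast
  rw [hk, cast_val']
  ring

lemma pow_translation (σ : Equiv.Perm (ZMod q)) (c : ZMod q)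
    (hc : ∀ i, σ i = i + c) : ∀ (n : ℕ) (i : ZMod q), (σ ^ n) i = i + n * c := by
  intro n
  induction n with
  | zero => intro i; simp
  | succ m ih =>
    intro i
    rw [pow_succ, Equiv.Perm.mul_apply, ih, hc]
    push_cast; ring

end Aux

/-- A `q`-cycle `σ` has descent number `1` iff it is a rotation cycle,
i.e. `σ = ρ^p` for some `1 ≤ p < q` relatively prime to `q`. -/

theorem descent_one_iff_rotation_cycle (q : ℕ) [NeZero q] (hq : 2 ≤ q)
    (σ : Equiv.Perm (ZMod q)) (hσ : IsQCycle q σ) :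
    desNum q σ = 1 ↔ ∃ p : ℕ, 1 ≤ p ∧ p < q ∧ Nat.Coprime p q ∧ σ = rotPerm q ^ p := by
  constructor
  · intro h
    obtain ⟨c, hc⟩ := translation_of_desNum_one q hq σ h
    obtain ⟨n, hn⟩ := hσ 0 1
    rw [pow_translation q σ c hc n 0, zero_add] at hn
    have hu : IsUnit ((c.val : ℕ) : ZMod q) := by
      rw [cast_val']
      exact IsUnit.of_mul_eq_one (n : ZMod q) (by rw [mul_comm]; exact hn)
    have hcop : Nat.Coprime c.val q := (ZMod.isUnit_iff_coprime c.val q).1 hu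
    refine ⟨c.val, ?_, ZMod.val_lt c, hcop, ?_⟩
    · rcases Nat.eq_zero_or_pos c.val with h0 | h0
      · exfalso
        rw [h0] at hcop
        have := Nat.coprime_zero_left q |>.1 hcop
        omega
      · exact h0
    · ext i
      rw [rotPerm_pow_apply, cast_val', hc]
  · rintro ⟨p, hp1, hpq, hpc, rfl⟩
    exact desNum_eq_one_of_translation q hq _ ((p : ZMod q)) fun i => rotPerm_pow_apply q p i
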